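/- Let N ≥ 2 and define R(x) = log₂(1 + N/x) + log₂ N + f₂(g(x)) for x > 0, where g(x) is the correct-detection probability P_c with noise variance x and f₂(p) = p log₂ p + (1-p) log₂((1-p)/(N-1)). Then R is convex on (0, ∞), and consequently for any positive random variable X, E[R(X)] ≥ R(E[X]). -/

import Mathlib

open Real MeasureTheory Finset

/-- The correct-detection probability as a function of the noise variance `x`. -/
noncomputable def gPc (N : ℕ) (x : ℝ) : ℝ :=
  (∑ r ∈ Finset.range (N - 1),
      ((N - 2).choose r : ℝ) * (-1) ^ r * ((r : ℝ) + ((N : ℝ) + 2 * x) / ((N : ℝ) + x))⁻¹) /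
  (∑ r ∈ Finset.range (N - 1), ((N - 2).choose r : ℝ) * (-1) ^ r * ((r : ℝ) + 1)⁻¹)

/-- The channel term `f₂` of the rate bound. -/
noncomputable def fTwo (N : ℕ) (p : ℝ) : ℝ :=
  p * Real.logb 2 p + (1 - p) * Real.logb 2 ((1 - p) / ((N : ℝ) - 1))

/-- The achievable-rate lower bound as a function of the effective noise variance. -/
noncomputable def Rate (N : ℕ) (x : ℝ) : ℝ :=
  Real.logb 2 (1 + (N : ℝ) / x) + Real.logb 2 (N : ℝ) + fTwo N (gPc N x)

lemma key_sum (m : ℕ) : ∀ t : ℝ, 0 < t →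
    ∑ r ∈ Finset.range (m+1), ((m.choose r : ℝ) * (-1)^r * ((r:ℝ)+t)⁻¹)
      = (Nat.factorial m : ℝ) / ∏ j ∈ Finset.range (m+1), (t + (j:ℝ)) := by
  induction m with
  | zero => intro t ht; simp
  | succ m ih =>
    intro t ht
    have hP : ∀ (k : ℕ) (s : ℝ), 0 < s → 0 < ∏ j ∈ Finset.range k, (s + (j:ℝ)) := by
      intro k s hs
      exact Finset.prod_pos fun j _ => by positivity
    have split : ∑ r ∈ Finset.range (m+2), (((m+1).choose r : ℝ) * (-1)^r * ((r:ℝ)+t)⁻¹)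
        = (∑ r ∈ Finset.range (m+1), ((m.choose r : ℝ) * (-1)^r * ((r:ℝ)+t)⁻¹))
          - ∑ r ∈ Finset.range (m+1), ((m.choose r : ℝ) * (-1)^r * ((r:ℝ)+(t+1))⁻¹) := by
      rw [Finset.sum_range_succ' (fun r => (((m+1).choose r : ℝ) * (-1)^r * ((r:ℝ)+t)⁻¹)) (m+1)]
      have e1 : ∀ i ∈ Finset.range (m+1),
          (((m+1).choose (i+1) : ℝ) * (-1)^(i+1) * (((i+1:ℕ):ℝ)+t)⁻¹)
          = ((m.choose (i+1) : ℝ) * (-1)^(i+1) * (((i+1:ℕ):ℝ)+t)⁻¹)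
            - ((m.choose i : ℝ) * (-1)^i * ((i:ℝ)+(t+1))⁻¹) := by
        intro i _
        rw [Nat.choose_succ_succ]
        push_cast
        have : ((i:ℝ)+1+t)⁻¹ = ((i:ℝ)+(t+1))⁻¹ := by ring_nf
        rw [this]
        ring
      rw [Finset.sum_congr rfl e1, Finset.sum_sub_distrib]
      have e2 : (∑ i ∈ Finset.range (m+1), ((m.choose (i+1) : ℝ) * (-1)^(i+1) * (((i+1:ℕ):ℝ)+t)⁻¹))
            + (((m+1).choose 0 : ℝ) * (-1)^(0:ℕ) * (((0:ℕ):ℝ)+t)⁻¹)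
          = ∑ r ∈ Finset.range (m+2), ((m.choose r : ℝ) * (-1)^r * ((r:ℝ)+t)⁻¹) := by
        rw [Finset.sum_range_succ' (fun r => ((m.choose r : ℝ) * (-1)^r * ((r:ℝ)+t)⁻¹)) (m+1)]
        simp
      have e3 : ∑ r ∈ Finset.range (m+2), ((m.choose r : ℝ) * (-1)^r * ((r:ℝ)+t)⁻¹)
          = ∑ r ∈ Finset.range (m+1), ((m.choose r : ℝ) * (-1)^r * ((r:ℝ)+t)⁻¹) := by
        rw [Finset.sum_range_succ]
        simp [Nat.choose_eq_zero_of_lt (Nat.lt_succ_self m)]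
      linarith [e2, e3]
    rw [split, ih t ht, ih (t+1) (by linarith)]
    have hprod1 : ∏ j ∈ Finset.range (m+2), (t + (j:ℝ))
        = (∏ j ∈ Finset.range (m+1), (t + (j:ℝ))) * (t + (m+1:ℕ)) := by
      rw [Finset.prod_range_succ]
    have hprod2 : ∏ j ∈ Finset.range (m+2), (t + (j:ℝ))
        = t * ∏ j ∈ Finset.range (m+1), ((t+1) + (j:ℝ)) := by
      rw [Finset.prod_range_succ' (fun j => (t + (j:ℝ))) (m+1)]
      push_cast
      rw [mul_comm]
      congr 1
      · norm_num
      · exact Finset.prod_congr rfl (fun i _ => by ring)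
    have h1 := hP (m+1) t ht
    have h2 := hP (m+1) (t+1) (by linarith)
    have h3 := hP (m+2) t ht
    rw [div_sub_div _ _ (ne_of_gt h1) (ne_of_gt h2), div_eq_div_iff (by positivity) (ne_of_gt h3)]
    have hfac : (((m+1).factorial : ℕ) : ℝ) = ((m:ℝ)+1) * (m.factorial : ℝ) := by
      rw [Nat.factorial_succ]; push_cast; ring
    push_cast at hprod1
    linear_combination ((m.factorial:ℝ) * ∏ j ∈ Finset.range (m+1), ((t+1) + (j:ℝ))) * hprod1
      - ((∏ j ∈ Finset.range (m+1), (t + (j:ℝ))) * (m.factorial:ℝ)) * hprod2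
      - ((∏ j ∈ Finset.range (m+1), (t + (j:ℝ))) * ∏ j ∈ Finset.range (m+1), ((t+1) + (j:ℝ))) * hfac

noncomputable def tFun (N : ℕ) (x : ℝ) : ℝ := ((N:ℝ) + 2*x)/((N:ℝ) + x)

noncomputable def GFun (N : ℕ) (t : ℝ) : ℝ :=
  (((N-1).factorial : ℕ) : ℝ) * ∏ j ∈ Finset.range (N-1), (t + (j:ℝ))⁻¹

lemma prod_one_add (k : ℕ) : ∏ j ∈ Finset.range k, ((1:ℝ) + (j:ℝ)) = (k.factorial : ℝ) := by
  induction k with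
  | zero => simp
  | succ k ih => rw [Finset.prod_range_succ, ih, Nat.factorial_succ]; push_cast; ring

lemma prod_two_add (k : ℕ) : ∏ j ∈ Finset.range k, ((2:ℝ) + (j:ℝ)) = ((k+1).factorial : ℝ) := by
  induction k with
  | zero => simp
  | succ k ih =>
      rw [Finset.prod_range_succ, ih, show k+1+1 = k+2 from rfl, Nat.factorial_succ (k+1)]
      push_cast; ring

lemma prod_pos_of_pos {t : ℝ} (ht : 0 < t) (k : ℕ) :
    0 < ∏ j ∈ Finset.range k, (t + (j:ℝ)) :=
  Finset.prod_pos fun j _ => by positivity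

lemma tFun_pos {N : ℕ} (hN : 2 ≤ N) {x : ℝ} (hx : 0 < x) : 0 < tFun N x := by
  have hN' : (0:ℝ) < N := by positivity
  unfold tFun; positivity

lemma tFun_mem {N : ℕ} (hN : 2 ≤ N) {x : ℝ} (hx : 0 < x) : tFun N x ∈ Set.Ioo (1:ℝ) 2 := by
  have hN' : (0:ℝ) < N := by positivity
  have hd : (0:ℝ) < (N:ℝ) + x := by linarith
  unfold tFun
  constructor
  · rw [lt_div_iff₀ hd]; linarith
  · rw [div_lt_iff₀ hd]; linarith

lemma gPc_eq {N : ℕ} (hN : 2 ≤ N) {x : ℝ} (hx : 0 < x) : gPc N x = GFun N (tFun N x) := by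
  obtain ⟨m, rfl⟩ : ∃ m, N = m + 2 := ⟨N - 2, by omega⟩
  have h1 : m + 2 - 1 = m + 1 := by omega
  have h2 : m + 2 - 2 = m := by omega
  have ht : 0 < tFun (m+2) x := tFun_pos hN hx
  have hnum := key_sum m (tFun (m+2) x) ht
  have hden := key_sum m 1 one_pos
  rw [_root_.prod_one_add (m+1)] at hden
  simp only [tFun] at hnum ht
  have hP := prod_pos_of_pos ht (m+1)
  unfold gPc GFun tFun
  rw [h1, h2, hnum, hden, Finset.prod_inv_distrib]
  have hf1 : (0:ℝ) < (m.factorial : ℝ) := by positivity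
  have hf2 : (0:ℝ) < (((m+1).factorial : ℕ) : ℝ) := by positivity
  field_simp

lemma inv_shift_convex (c : ℝ) (hc : 0 ≤ c) :
    ConvexOn ℝ (Set.Ioi (0:ℝ)) (fun t : ℝ => (t + c)⁻¹) := by
  have h1 : ConvexOn ℝ (Set.Ioi (0:ℝ)) (fun x : ℝ => x ^ (-1:ℤ)) := convexOn_zpow (-1)
  have h2 := h1.translate_right c
  have hsub : Set.Ioi (0:ℝ) ⊆ (fun z => c + z) ⁻¹' Set.Ioi (0:ℝ) := by
    intro z hz
    simp only [Set.mem_preimage, Set.mem_Ioi] at *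
    linarith
  have h3 := h2.subset hsub (convex_Ioi 0)
  refine h3.congr fun z _ => ?_
  simp [zpow_neg_one, add_comm]

lemma antitoneOn_prod_inv (k : ℕ) :
    AntitoneOn (fun t : ℝ => ∏ j ∈ Finset.range k, (t + (j:ℝ))⁻¹) (Set.Ioi 0) := by
  intro a ha b hb hab
  have ha' : (0:ℝ) < a := ha
  have hb' : (0:ℝ) < b := hb
  refine Finset.prod_le_prod (fun j _ => by positivity) (fun j _ => ?_)
  have haj : (0:ℝ) < a + (j:ℝ) := by positivity
  exact inv_anti₀ haj (by linarith)

lemma convexOn_prod_inv (k : ℕ) :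
    ConvexOn ℝ (Set.Ioi (0:ℝ)) (fun t : ℝ => ∏ j ∈ Finset.range k, (t + (j:ℝ))⁻¹) := by
  induction k with
  | zero => simpa using convexOn_const (1:ℝ) (convex_Ioi 0)
  | succ k ih =>
    have hbase := inv_shift_convex (k:ℝ) (by positivity)
    have hanti : AntitoneOn (fun t : ℝ => (t + (k:ℝ))⁻¹) (Set.Ioi 0) := by
      intro a ha b hb hab
      have ha' : (0:ℝ) < a := ha
      have haj : (0:ℝ) < a + (k:ℝ) := by positivity
      exact inv_anti₀ haj (by linarith)
    have hmul := ih.mul hbase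
      (fun x hx => by have : (0:ℝ) < x := hx; positivity)
      (fun x hx => by have : (0:ℝ) < x := hx; positivity)
      ((antitoneOn_prod_inv k).monovaryOn hanti)
    refine hmul.congr fun t _ => ?_
    simp [Finset.prod_range_succ, mul_comm]

lemma GFun_convex (N : ℕ) : ConvexOn ℝ (Set.Ioi (0:ℝ)) (GFun N) := by
  have h := (convexOn_prod_inv (N-1)).smul
    (c := (((N-1).factorial : ℕ) : ℝ)) (by positivity)
  refine h.congr fun t _ => ?_
  simp [GFun]

lemma GFun_anti (N : ℕ) : AntitoneOn (GFun N) (Set.Ioi (0:ℝ)) := by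
  intro a ha b hb hab
  exact mul_le_mul_of_nonneg_left (antitoneOn_prod_inv (N-1) ha hb hab) (by positivity)

lemma GFun_mem {N : ℕ} (hN : 2 ≤ N) {t : ℝ} (ht : t ∈ Set.Ioo (1:ℝ) 2) :
    GFun N t ∈ Set.Ioo (1/(N:ℝ)) 1 := by
  obtain ⟨ht1, ht2⟩ := ht
  have ht0 : (0:ℝ) < t := by linarith
  have hP := prod_pos_of_pos ht0 (N-1)
  have hne : (Finset.range (N-1)).Nonempty := by
    rw [Finset.nonempty_range_iff]; omega
  have hlow : (((N-1).factorial : ℕ) : ℝ) < ∏ j ∈ Finset.range (N-1), (t + (j:ℝ)) := by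
    rw [← _root_.prod_one_add (N-1)]
    exact Finset.prod_lt_prod_of_nonempty (fun j _ => by positivity)
      (fun j _ => by linarith) hne
  have hhigh : (∏ j ∈ Finset.range (N-1), (t + (j:ℝ))) < ((N.factorial : ℕ) : ℝ) := by
    have : ((N.factorial : ℕ) : ℝ) = ∏ j ∈ Finset.range (N-1), ((2:ℝ) + (j:ℝ)) := by
      rw [prod_two_add (N-1), show N-1+1 = N from by omega]
    rw [this]
    exact Finset.prod_lt_prod_of_nonempty (fun j _ => by positivity)
      (fun j _ => by linarith) hne
  have hGeq : GFun N t = (((N-1).factorial : ℕ) : ℝ) / ∏ j ∈ Finset.range (N-1), (t + (j:ℝ)) := by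
    rw [GFun, Finset.prod_inv_distrib, div_eq_mul_inv]
  have hNfac : ((N.factorial : ℕ) : ℝ) = (N:ℝ) * (((N-1).factorial : ℕ) : ℝ) := by
    rw [← Nat.mul_factorial_pred (by omega : N ≠ 0)]
    push_cast
    ring
  have hN0 : (0:ℝ) < (N:ℝ) := by positivity
  constructor
  · rw [hGeq, div_lt_div_iff₀ hN0 hP, one_mul]
    rw [hNfac] at hhigh
    linarith
  · rw [hGeq, div_lt_one hP]
    exact hlow

lemma tFun_concave {N : ℕ} (hN : 2 ≤ N) : ConcaveOn ℝ (Set.Ioi (0:ℝ)) (tFun N) := by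
  have h1 := (inv_shift_convex (N:ℝ) (by positivity)).smul (c := (N:ℝ)) (by positivity)
  have h2 := h1.neg.add_const 2
  refine h2.congr fun x hx => ?_
  have hx' : (0:ℝ) < x := hx
  have hd : (0:ℝ) < x + (N:ℝ) := by positivity
  simp only [Pi.add_apply, Pi.neg_apply, smul_eq_mul]
  unfold tFun
  field_simp
  ring

lemma comp_convex_mono {g f : ℝ → ℝ} {T s : Set ℝ} (hg : ConvexOn ℝ T g)
    (hmono : MonotoneOn g T) (hf : ConvexOn ℝ s f) (hm : ∀ x ∈ s, f x ∈ T) :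
    ConvexOn ℝ s (fun x => g (f x)) := by
  refine ⟨hf.1, fun x hx y hy a b ha hb hab => ?_⟩
  have hfx := hm x hx
  have hfy := hm y hy
  have hcomb : a • f x + b • f y ∈ T := hg.1 hfx hfy ha hb hab
  have hfc : f (a • x + b • y) ∈ T := hm _ (hf.1 hx hy ha hb hab)
  calc g (f (a • x + b • y)) ≤ g (a • f x + b • f y) :=
        hmono hfc hcomb (hf.2 hx hy ha hb hab)
    _ ≤ a • g (f x) + b • g (f y) := hg.2 hfx hfy ha hb hab

lemma comp_convex_anti {g f : ℝ → ℝ} {T s : Set ℝ} (hg : ConvexOn ℝ T g)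
    (hanti : AntitoneOn g T) (hf : ConcaveOn ℝ s f) (hm : ∀ x ∈ s, f x ∈ T) :
    ConvexOn ℝ s (fun x => g (f x)) := by
  refine ⟨hf.1, fun x hx y hy a b ha hb hab => ?_⟩
  have hfx := hm x hx
  have hfy := hm y hy
  have hcomb : a • f x + b • f y ∈ T := hg.1 hfx hfy ha hb hab
  have hfc : f (a • x + b • y) ∈ T := hm _ (hf.1 hx hy ha hb hab)
  calc g (f (a • x + b • y)) ≤ g (a • f x + b • f y) :=
        hanti hcomb hfc (hf.2 hx hy ha hb hab)
    _ ≤ a • g (f x) + b • g (f y) := hg.2 hfx hfy ha hb hab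

-- convexity of v ↦ -log (1 - v) on Iio 1, and its monotonicity
lemma convexOn_neg_log_one_sub : ConvexOn ℝ (Set.Iio (1:ℝ)) (fun v : ℝ => -Real.log (1 - v)) := by
  refine ⟨convex_Iio 1, fun x hx y hy a b ha hb hab => ?_⟩
  have hx' : (0:ℝ) < 1 - x := by have := Set.mem_Iio.mp hx; linarith
  have hy' : (0:ℝ) < 1 - y := by have := Set.mem_Iio.mp hy; linarith
  have key := strictConcaveOn_log_Ioi.concaveOn.2 (Set.mem_Ioi.mpr hx')
    (Set.mem_Ioi.mpr hy') ha hb hab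
  have harg : 1 - (a • x + b • y) = a • (1 - x) + b • (1 - y) := by
    simp only [smul_eq_mul]; nlinarith [hab]
  simp only [smul_eq_mul] at *
  rw [harg]
  nlinarith [key]

lemma monotoneOn_neg_log_one_sub : MonotoneOn (fun v : ℝ => -Real.log (1 - v)) (Set.Iio (1:ℝ)) := by
  intro a ha b hb hab
  have hb' : (0:ℝ) < 1 - b := by have := Set.mem_Iio.mp hb; linarith
  have h := Real.log_le_log hb' (by linarith : 1 - b ≤ 1 - a)
  simp only [neg_le_neg_iff]
  linarith [h]

lemma term1_convex {N : ℕ} (hN : 2 ≤ N) :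
    ConvexOn ℝ (Set.Ioi (0:ℝ)) (fun x : ℝ => Real.logb 2 (1 + (N:ℝ)/x)) := by
  have hN0 : (0:ℝ) < (N:ℝ) := by positivity
  have hψ : ConvexOn ℝ (Set.Ioi (0:ℝ)) (fun x : ℝ => (N:ℝ) * (x + (N:ℝ))⁻¹) := by
    have := (inv_shift_convex (N:ℝ) (by positivity)).smul (c := (N:ℝ)) (by positivity)
    exact this.congr fun x _ => by simp [smul_eq_mul]
  have hmem : ∀ x ∈ Set.Ioi (0:ℝ), (N:ℝ) * (x + (N:ℝ))⁻¹ ∈ Set.Iio (1:ℝ) := by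
    intro x hx
    have hx' : (0:ℝ) < x := hx
    have hd : (0:ℝ) < x + (N:ℝ) := by positivity
    rw [Set.mem_Iio, mul_inv_lt_iff₀ hd, one_mul]
    linarith
  have hcomp := comp_convex_mono convexOn_neg_log_one_sub monotoneOn_neg_log_one_sub hψ hmem
  have hsmul := hcomp.smul (c := (Real.log 2)⁻¹) (by positivity)
  refine hsmul.congr fun x hx => ?_
  have hx' : (0:ℝ) < x := hx
  have hd : (0:ℝ) < x + (N:ℝ) := by positivity
  have h1 : 1 - (N:ℝ) * (x + (N:ℝ))⁻¹ = x / (x + (N:ℝ)) := by field_simp; ring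
  have h2 : 1 + (N:ℝ)/x = (x + (N:ℝ))/x := by field_simp
  beta_reduce
  rw [smul_eq_mul, h1, h2, Real.log_div hx'.ne' hd.ne', Real.logb,
    Real.log_div hd.ne' hx'.ne']
  ring

noncomputable def Fnice (N : ℕ) (p : ℝ) : ℝ :=
  (p * Real.log p + (1-p) * Real.log (1-p) + Real.log ((N:ℝ)-1) * (p-1)) / Real.log 2

lemma fTwo_eqOn {N : ℕ} (hN : 2 ≤ N) {p : ℝ} (hp : p ∈ Set.Ioo (0:ℝ) 1) :
    p * Real.logb 2 p + (1 - p) * Real.logb 2 ((1 - p) / ((N:ℝ) - 1)) = Fnice N p := by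
  obtain ⟨hp0, hp1⟩ := hp
  have hc : (0:ℝ) < (N:ℝ) - 1 := by
    have : (2:ℝ) ≤ (N:ℝ) := by exact_mod_cast hN
    linarith
  have h1p : (0:ℝ) < 1 - p := by linarith
  simp only [Real.logb, Fnice]
  rw [Real.log_div h1p.ne' hc.ne']
  ring

lemma Fnice_convex {N : ℕ} (hN : 2 ≤ N) : ConvexOn ℝ (Set.Ioo (0:ℝ) 1) (Fnice N) := by
  have c1 : ConvexOn ℝ (Set.Ici (0:ℝ)) (fun p : ℝ => p * Real.log p) := by
    have := Real.concaveOn_negMulLog.neg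
    exact this.congr fun p _ => by simp [Real.negMulLog]
  have c1' : ConvexOn ℝ (Set.Ioo (0:ℝ) 1) (fun p : ℝ => p * Real.log p) :=
    c1.subset (fun p hp => le_of_lt hp.1) (convex_Ioo 0 1)
  have c2 : ConvexOn ℝ (Set.Ioo (0:ℝ) 1) (fun p : ℝ => (1-p) * Real.log (1-p)) := by
    refine ⟨convex_Ioo 0 1, fun x hx y hy a b ha hb hab => ?_⟩
    have hx' : (0:ℝ) ≤ 1 - x := by have := hx.2; linarith
    have hy' : (0:ℝ) ≤ 1 - y := by have := hy.2; linarith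
    have key := c1.2 (Set.mem_Ici.mpr hx') (Set.mem_Ici.mpr hy') ha hb hab
    simp only [smul_eq_mul] at *
    have harg : 1 - (a * x + b * y) = a * (1 - x) + b * (1 - y) := by nlinarith [hab]
    rw [harg]
    nlinarith [key]
  have c3 : ConvexOn ℝ (Set.Ioo (0:ℝ) 1) (fun p : ℝ => Real.log ((N:ℝ)-1) * (p-1)) := by
    refine ⟨convex_Ioo 0 1, fun x hx y hy a b ha hb hab => ?_⟩
    simp only [smul_eq_mul]
    refine le_of_eq ?_
    linear_combination (Real.log ((N:ℝ)-1)) * hab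
  have hsum := ((c1'.add c2).add c3).smul (c := (Real.log 2)⁻¹) (by positivity)
  exact hsum.congr fun p _ => by simp only [Pi.add_apply, smul_eq_mul, Fnice]; ring

lemma Fnice_hasDeriv {N : ℕ} (hN : 2 ≤ N) {p : ℝ} (hp : p ∈ Set.Ioo (0:ℝ) 1) :
    HasDerivAt (Fnice N)
      ((Real.log p - Real.log (1-p) + Real.log ((N:ℝ)-1)) / Real.log 2) p := by
  obtain ⟨hp0, hp1⟩ := hp
  have h1p : (0:ℝ) < 1 - p := by linarith
  have h1 : HasDerivAt (fun q : ℝ => q * Real.log q) (Real.log p + 1) p :=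
    Real.hasDerivAt_mul_log hp0.ne'
  have h2 : HasDerivAt (fun q : ℝ => (1-q) * Real.log (1-q)) (-(Real.log (1-p) + 1)) p := by
    have inner : HasDerivAt (fun q : ℝ => 1 - q) (-1) p := by
      simpa using (hasDerivAt_id p).const_sub 1
    have outer : HasDerivAt (fun y : ℝ => y * Real.log y) (Real.log (1-p) + 1) (1-p) :=
      Real.hasDerivAt_mul_log h1p.ne'
    have hcmp := outer.comp p inner
    exact hcmp.congr_deriv (by ring)
  have h3 : HasDerivAt (fun q : ℝ => Real.log ((N:ℝ)-1) * (q-1)) (Real.log ((N:ℝ)-1)) p := by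
    have hid : HasDerivAt (fun q : ℝ => q - 1) 1 p := (hasDerivAt_id p).sub_const 1
    simpa using hid.const_mul (Real.log ((N:ℝ)-1))
  have hfin := ((h1.add h2).add h3).div_const (Real.log 2)
  exact hfin.congr_deriv (by ring)

lemma Fnice_mono {N : ℕ} (hN : 2 ≤ N) :
    StrictMonoOn (Fnice N) (Set.Ioo (1/(N:ℝ)) 1) := by
  have hN0 : (0:ℝ) < (N:ℝ) := by positivity
  have hNinv : (0:ℝ) < 1/(N:ℝ) := by positivity
  have hsub : Set.Ioo (1/(N:ℝ)) 1 ⊆ Set.Ioo (0:ℝ) 1 := fun p hp =>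
    ⟨lt_trans hNinv hp.1, hp.2⟩
  apply strictMonoOn_of_deriv_pos (convex_Ioo _ _)
  · intro p hp
    exact ((Fnice_hasDeriv hN (hsub hp)).differentiableAt).continuousAt.continuousWithinAt
  · intro p hp
    rw [interior_Ioo] at hp
    rw [(Fnice_hasDeriv hN (hsub hp)).deriv]
    have hp0 : (0:ℝ) < p := lt_trans hNinv hp.1
    have hp1 : p < 1 := hp.2
    have h1p : (0:ℝ) < 1 - p := by linarith
    have hc : (0:ℝ) < (N:ℝ) - 1 := by
      have : (2:ℝ) ≤ (N:ℝ) := by exact_mod_cast hN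
      linarith
    have hlog2 : (0:ℝ) < Real.log 2 := Real.log_pos one_lt_two
    have hkey : Real.log (1-p) < Real.log p + Real.log ((N:ℝ)-1) := by
      rw [← Real.log_mul hp0.ne' hc.ne']
      apply Real.log_lt_log h1p
      have hpn := hp.1
      rw [div_lt_iff₀ hN0] at hpn
      nlinarith
    apply div_pos _ hlog2
    linarith

lemma rate_convex {N : ℕ} (hN : 2 ≤ N) : ConvexOn ℝ (Set.Ioi (0:ℝ)) (Rate N) := by
  have hN0 : (0:ℝ) < (N:ℝ) := by positivity
  have hNinv : (0:ℝ) < 1/(N:ℝ) := by positivity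
  have h1 := term1_convex hN
  have h2 : ConvexOn ℝ (Set.Ioi (0:ℝ)) (fun _ : ℝ => Real.logb 2 (N:ℝ)) :=
    convexOn_const _ (convex_Ioi 0)
  have hTmem : ∀ x ∈ Set.Ioi (0:ℝ), tFun N x ∈ Set.Ioi (0:ℝ) := fun x hx =>
    Set.mem_Ioi.mpr (lt_trans zero_lt_one (tFun_mem hN hx).1)
  have hI : ConvexOn ℝ (Set.Ioi (0:ℝ)) (fun x => GFun N (tFun N x)) :=
    comp_convex_anti (GFun_convex N) (GFun_anti N) (tFun_concave hN) hTmem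
  have hImem : ∀ x ∈ Set.Ioi (0:ℝ), GFun N (tFun N x) ∈ Set.Ioo (1/(N:ℝ)) 1 := fun x hx =>
    GFun_mem hN (tFun_mem hN hx)
  have hsub : Set.Ioo (1/(N:ℝ)) 1 ⊆ Set.Ioo (0:ℝ) 1 := fun p hp =>
    ⟨lt_trans hNinv hp.1, hp.2⟩
  have hFc : ConvexOn ℝ (Set.Ioo (1/(N:ℝ)) 1) (Fnice N) :=
    (Fnice_convex hN).subset hsub (convex_Ioo _ _)
  have hH : ConvexOn ℝ (Set.Ioi (0:ℝ)) (fun x => Fnice N (GFun N (tFun N x))) :=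
    comp_convex_mono hFc (Fnice_mono hN).monotoneOn hI hImem
  have hfin := (h1.add h2).add hH
  refine hfin.congr fun x hx => ?_
  have hx' : (0:ℝ) < x := hx
  simp only [Pi.add_apply]
  unfold Rate
  congr 1
  rw [gPc_eq hN hx']
  exact (fTwo_eqOn hN (hsub (hImem x hx))).symm

open MeasureTheory in
lemma jensen_part {f : ℝ → ℝ} (hconv : ConvexOn ℝ (Set.Ioi (0:ℝ)) f) :
    ∀ (Ω : Type) (_ : MeasurableSpace Ω) (μ : Measure Ω), IsProbabilityMeasure μ →
      ∀ X : Ω → ℝ, (∀ᵐ ω ∂μ, 0 < X ω) → Integrable X μ →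
        Integrable (fun ω => f (X ω)) μ →
        f (∫ ω, X ω ∂μ) ≤ ∫ ω, f (X ω) ∂μ := by
  intro Ω inst μ hprob X hXpos hXint hfint
  set m := ∫ ω, X ω ∂μ with hm_def
  have hm : 0 < m := by
    rw [hm_def]
    rw [integral_pos_iff_support_of_nonneg_ae (hXpos.mono fun ω h => le_of_lt h) hXint]
    have hc : μ (Function.support X)ᶜ = 0 := by
      apply measure_mono_null _ (mem_ae_iff.mp hXpos)
      intro ω hω
      simp only [Set.mem_compl_iff, Function.mem_support, not_not] at hω
      simp [hω]
    have hle := measure_union_le (μ := μ) (Function.support X) (Function.support X)ᶜ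
    rw [Set.union_compl_self, hc, add_zero, measure_univ] at hle
    have h1 : μ (Function.support X) = 1 := by simpa using hle
    simp [h1]
  -- supporting line at m
  set Sset : Set ℝ := (fun y => (f m - f y)/(m - y)) '' (Set.Ioo 0 m) with hSdef
  have hne : Sset.Nonempty := ⟨_, ⟨m/2, ⟨by positivity, by linarith⟩, rfl⟩⟩
  have hslope : ∀ y ∈ Set.Ioo (0:ℝ) m, ∀ z, m < z →
      (f m - f y)/(m - y) ≤ (f z - f m)/(z - m) := by
    intro y hy z hz
    exact hconv.slope_mono_adjacent (Set.mem_Ioi.mpr hy.1)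
      (Set.mem_Ioi.mpr (lt_trans hm hz)) hy.2 hz
  have hbdd : BddAbove Sset := by
    refine ⟨(f (m+1) - f m)/((m+1) - m), ?_⟩
    rintro r ⟨y, hy, rfl⟩
    exact hslope y hy (m+1) (by linarith)
  set c := sSup Sset with hcdef
  have key : ∀ y : ℝ, 0 < y → f m + c * (y - m) ≤ f y := by
    intro y hy
    rcases lt_trichotomy y m with h | h | h
    · have hmem : (f m - f y)/(m - y) ∈ Sset := ⟨y, ⟨hy, h⟩, rfl⟩
      have hle := le_csSup hbdd hmem
      rw [div_le_iff₀ (by linarith : (0:ℝ) < m - y)] at hle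
      nlinarith
    · simp [h]
    · have hle : c ≤ (f y - f m)/(y - m) := by
        apply csSup_le hne
        rintro r ⟨z, hz, rfl⟩
        exact hslope z hz y h
      rw [le_div_iff₀ (by linarith : (0:ℝ) < y - m)] at hle
      nlinarith
  have hae : ∀ᵐ ω ∂μ, f m + c * (X ω - m) ≤ f (X ω) :=
    hXpos.mono fun ω h => key _ h
  have hint2 : Integrable (fun ω => c * (X ω - m)) μ := by
    have h := (hXint.sub (integrable_const m)).const_mul c
    simpa using h
  have hintL : Integrable (fun ω => f m + c * (X ω - m)) μ :=
    (integrable_const (f m)).add hint2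
  have hle := integral_mono_ae hintL hfint hae
  have hcalc : ∫ ω, (f m + c * (X ω - m)) ∂μ = f m := by
    rw [integral_add (integrable_const (f m)) hint2, integral_const, MeasureTheory.integral_const_mul,
      integral_sub hXint (integrable_const m), integral_const]
    simp [hm_def]
  rw [hcalc] at hle
  exact hle

theorem rate_convex_and_jensen (N : ℕ) (hN : 2 ≤ N) :
    ConvexOn ℝ (Set.Ioi (0 : ℝ)) (Rate N) ∧
    ∀ (Ω : Type) (_ : MeasurableSpace Ω) (μ : Measure Ω), IsProbabilityMeasure μ →
      ∀ X : Ω → ℝ, (∀ᵐ ω ∂μ, 0 < X ω) → Integrable X μ →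
        Integrable (fun ω => Rate N (X ω)) μ →
        Rate N (∫ ω, X ω ∂μ) ≤ ∫ ω, Rate N (X ω) ∂μ :=
  ⟨rate_convex hN, jensen_part (rate_convex hN)⟩
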